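/- Let (G_n) be a sequence of simple graphs, G_n on n vertices, such that each G_n contains a vertex adjacent to all other vertices, and suppose the average degrees d̄_{G_n} = d_{G_n}/n converge to a finite limit d_∞ as n → ∞. Then limsup_{n→∞} S(G_n)/log₂(n−1) ≤ 1 − 1/d_∞. -/

import Mathlib

open Finset Matrix

variable {V : Type*}

/-- The degree sum `d_G = Tr(Δ(G)) = 2|E(G)|` of a graph. -/
def degreeSum [Fintype V] (G : SimpleGraph V) [DecidableRel G.Adj] : ℕ :=
  ∑ v : V, G.degree v

/-- The density matrix `ρ_G = L(G)/d_G` of a graph. -/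
noncomputable def densityMatrix [Fintype V] [DecidableEq V]
    (G : SimpleGraph V) [DecidableRel G.Adj] : Matrix V V ℝ :=
  ((degreeSum G : ℝ))⁻¹ • G.lapMatrix ℝ

/-- The von Neumann entropy `-∑ λᵢ log₂ λᵢ` of a (hermitian) matrix, computed
from its eigenvalues; the convention `0 log₂ 0 = 0` holds since `Real.logb 2 0 = 0`. -/
noncomputable def matEntropy [Fintype V] [DecidableEq V] (ρ : Matrix V V ℝ) : ℝ :=
  if h : ρ.IsHermitian then -∑ i : V, h.eigenvalues i * Real.logb 2 (h.eigenvalues i) else 0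

/-- The von Neumann entropy `S(G)` of a graph. -/
noncomputable def graphEntropy [Fintype V] [DecidableEq V]
    (G : SimpleGraph V) [DecidableRel G.Adj] : ℝ :=
  matEntropy (densityMatrix G)

lemma negMulLog_le_one' {x : ℝ} (h0 : 0 ≤ x) : Real.negMulLog x ≤ 1 := by
  rcases eq_or_lt_of_le h0 with h | h
  · simp [← h]
  · have hlog : Real.log x⁻¹ ≤ x⁻¹ - 1 := Real.log_le_sub_one_of_pos (by positivity)
    have hx : Real.negMulLog x = x * Real.log x⁻¹ := by
      rw [Real.log_inv, Real.negMulLog]; ring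
    rw [hx]
    calc x * Real.log x⁻¹ ≤ x * (x⁻¹ - 1) := mul_le_mul_of_nonneg_left hlog h0
      _ = 1 - x := by field_simp
      _ ≤ 1 := by linarith

lemma sum_eigenvalues_eq_trace' {n : Type*} [Fintype n] [DecidableEq n]
    {A : Matrix n n ℝ} (hA : A.IsHermitian) : ∑ i, hA.eigenvalues i = A.trace := by
  have h := hA.spectral_theorem
  have : A.trace = (Matrix.diagonal (RCLike.ofReal ∘ hA.eigenvalues) : Matrix n n ℝ).trace := by
    conv_lhs => rw [h]
    rw [Unitary.conjStarAlgAut_apply, Matrix.trace_mul_cycle,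
      (Matrix.mem_unitaryGroup_iff').mp (hA.eigenvectorUnitary).2, one_mul]
  rw [this, Matrix.trace_diagonal]
  simp

lemma exists_eigenvalue_of_mulVec {n : Type*} [Fintype n] [DecidableEq n] [Nonempty n]
    {A : Matrix n n ℝ} (hA : A.IsHermitian) {x : n → ℝ} (hx : x ≠ 0) {μ : ℝ}
    (h : A.mulVec x = μ • x) : ∃ i, hA.eigenvalues i = μ := by
  have hspec : μ ∈ spectrum ℝ A := by
    rw [← AlgEquiv.spectrum_eq (Matrix.toLinAlgEquiv' (R := ℝ) (n := n))]
    rw [← Module.End.hasEigenvalue_iff_mem_spectrum]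
    apply Module.End.hasEigenvalue_of_hasEigenvector (x := x)
    refine ⟨Module.End.mem_eigenspace_iff.mpr ?_, hx⟩
    show Matrix.toLin' A x = μ • x
    rw [Matrix.toLin'_apply, h]
  rw [hA.spectrum_real_eq_range_eigenvalues] at hspec
  exact hspec.imp fun i hi => hi

section Graph
variable {n : ℕ} (G : SimpleGraph (Fin n)) [DecidableRel G.Adj] (v : Fin n)
  (hv : ∀ u, u ≠ v → G.Adj v u)

include hv

lemma neighborFinset_dom : G.neighborFinset v = Finset.univ.erase v := by
  ext u
  simp only [SimpleGraph.mem_neighborFinset, Finset.mem_erase, Finset.mem_univ, and_true]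
  exact ⟨fun h => h.ne', fun h => hv u h⟩

lemma degree_dom : G.degree v = n - 1 := by
  rw [SimpleGraph.degree, neighborFinset_dom G v hv,
    Finset.card_erase_of_mem (Finset.mem_univ v)]
  simp

lemma degreeSum_ge : 2 * (n - 1) ≤ degreeSum G := by
  have h1 : degreeSum G = G.degree v + ∑ u ∈ Finset.univ.erase v, G.degree u := by
    rw [degreeSum, ← Finset.add_sum_erase _ _ (Finset.mem_univ v)]
  have h2 : ∀ u ∈ Finset.univ.erase v, 1 ≤ G.degree u := by
    intro u hu
    have hadj : G.Adj u v := (hv u (Finset.mem_erase.mp hu).1).symm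
    have : v ∈ G.neighborFinset u := by simpa [SimpleGraph.mem_neighborFinset] using hadj
    exact Finset.card_pos.mpr ⟨v, this⟩
  have h3 : (Finset.univ.erase v).card ≤ ∑ u ∈ Finset.univ.erase v, G.degree u := by
    calc (Finset.univ.erase v).card = ∑ u ∈ Finset.univ.erase v, 1 := by simp
    _ ≤ _ := Finset.sum_le_sum h2
  have h4 : (Finset.univ.erase v).card = n - 1 := by
    rw [Finset.card_erase_of_mem (Finset.mem_univ v)]; simp
  rw [degree_dom G v hv] at h1
  omega

lemma lap_mulVec (hn : 2 ≤ n) :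
    (G.lapMatrix ℝ) *ᵥ (fun u => if u = v then (n : ℝ) - 1 else -1)
      = (n : ℝ) • (fun u => if u = v then (n : ℝ) - 1 else -1) := by
  funext u
  rw [SimpleGraph.lapMatrix_mulVec_apply]
  by_cases huv : u = v
  · subst huv
    have hsum : ∑ w ∈ G.neighborFinset u, (if w = u then (n : ℝ) - 1 else -1)
        = -((n : ℝ) - 1) := by
      rw [neighborFinset_dom G u hv]
      rw [Finset.sum_congr rfl (fun w hw => if_neg (Finset.mem_erase.mp hw).1)]
      rw [Finset.sum_const, Finset.card_erase_of_mem (Finset.mem_univ u)]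
      have : 1 ≤ n := by omega
      simp [Nat.cast_sub this]
    rw [hsum, degree_dom G u hv]
    have h1 : ((n - 1 : ℕ) : ℝ) = (n : ℝ) - 1 := by
      have : 1 ≤ n := by omega
      push_cast [this]; ring
    simp only [Pi.smul_apply, smul_eq_mul, h1, eq_self_iff_true, if_true]
    ring
  · have hvmem : v ∈ G.neighborFinset u := by
      simp [SimpleGraph.mem_neighborFinset]
      exact (hv u huv).symm
    have hdeg1 : 1 ≤ G.degree u := Finset.card_pos.mpr ⟨v, hvmem⟩
    have hsum : ∑ w ∈ G.neighborFinset u, (if w = v then (n : ℝ) - 1 else -1)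
        = (n : ℝ) - (G.degree u : ℝ) := by
      rw [← Finset.add_sum_erase _ _ hvmem, if_pos rfl]
      rw [Finset.sum_congr rfl (fun w hw => if_neg (Finset.mem_erase.mp hw).1)]
      rw [Finset.sum_const, Finset.card_erase_of_mem hvmem]
      rw [nsmul_eq_mul, show #(G.neighborFinset u) = G.degree u from rfl, Nat.cast_sub hdeg1]
      push_cast
      ring
    rw [hsum]
    simp only [if_neg huv, Pi.smul_apply, smul_eq_mul]
    ring

lemma entropy_bound (hn : 3 ≤ n) :
    0 ≤ graphEntropy G ∧
    graphEntropy G / Real.logb 2 ((n : ℝ) - 1)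
      ≤ (1 - (n : ℝ) / (degreeSum G : ℝ)) + 2 / Real.log ((n : ℝ) - 1) := by
  have hnR : (3 : ℝ) ≤ (n : ℝ) := by exact_mod_cast hn
  have hn1 : (0 : ℝ) < (n : ℝ) - 1 := by linarith
  have hdnat : 2 * (n - 1) ≤ degreeSum G := degreeSum_ge G v hv
  have hd2 : 2 * ((n : ℝ) - 1) ≤ (degreeSum G : ℝ) := by
    calc 2 * ((n : ℝ) - 1) = ((2 * (n - 1) : ℕ) : ℝ) := by
          push_cast [Nat.cast_sub (by omega : 1 ≤ n)]; ring
    _ ≤ _ := by exact_mod_cast hdnat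
  have hdpos : (0 : ℝ) < (degreeSum G : ℝ) := by linarith
  set d : ℝ := (degreeSum G : ℝ) with hd_def
  -- positive semidefiniteness
  have hPSD : (densityMatrix G).PosSemidef := by
    constructor
    · show (densityMatrix G).IsHermitian
      unfold densityMatrix
      rw [Matrix.IsHermitian, Matrix.conjTranspose_smul,
        (SimpleGraph.posSemidef_lapMatrix ℝ G).1.eq, star_trivial]
    · intro x
      unfold densityMatrix
      exact ((SimpleGraph.posSemidef_lapMatrix ℝ G).smul
        (by positivity : (0 : ℝ) ≤ ((degreeSum G : ℝ))⁻¹)).2 x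
  have hH : (densityMatrix G).IsHermitian := hPSD.1
  have heignn : ∀ i, 0 ≤ hH.eigenvalues i := hPSD.eigenvalues_nonneg
  -- trace
  have htrL : (G.lapMatrix ℝ).trace = d := by
    rw [Matrix.trace, hd_def, degreeSum]
    push_cast
    apply Finset.sum_congr rfl
    intro i _
    simp [Matrix.diag, SimpleGraph.lapMatrix, SimpleGraph.degMatrix]
  have hsum1 : ∑ i, hH.eigenvalues i = 1 := by
    rw [sum_eigenvalues_eq_trace' hH]
    unfold densityMatrix
    rw [Matrix.trace_smul, htrL, smul_eq_mul, ← hd_def, inv_mul_cancel₀ hdpos.ne']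
  -- the eigenvalue n/d
  haveI : Nonempty (Fin n) := ⟨v⟩
  set x : Fin n → ℝ := fun u => if u = v then (n : ℝ) - 1 else -1 with hx_def
  have hxne : x ≠ 0 := by
    intro h
    have := congrFun h v
    simp [hx_def] at this
    linarith
  have hmul : (densityMatrix G) *ᵥ x = ((n : ℝ) / d) • x := by
    unfold densityMatrix
    rw [smul_mulVec, lap_mulVec G v hv (by omega), smul_smul, ← hd_def,
      inv_mul_eq_div]
  obtain ⟨i0, hi0⟩ := exists_eigenvalue_of_mulVec hH hxne hmul
  set μ : ℝ := (n : ℝ) / d with hμ_def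
  -- basic bounds on eigenvalues
  have hle1 : ∀ i, hH.eigenvalues i ≤ 1 := by
    intro i
    calc hH.eigenvalues i ≤ ∑ j, hH.eigenvalues j :=
          Finset.single_le_sum (fun j _ => heignn j) (Finset.mem_univ i)
    _ = 1 := hsum1
  set s : ℝ := ∑ i ∈ Finset.univ.erase i0, hH.eigenvalues i with hs_def
  have hs_eq : s = 1 - μ := by
    have := Finset.add_sum_erase _ hH.eigenvalues (Finset.mem_univ i0)
    rw [hsum1, hi0] at this
    linarith
  have hs0 : 0 ≤ s := Finset.sum_nonneg fun i _ => heignn i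
  have hμ0 : 0 ≤ μ := hi0 ▸ heignn i0
  -- entropy as sum of negMulLog
  have hlog2 : (0 : ℝ) < Real.log 2 := Real.log_pos one_lt_two
  have hEnt : graphEntropy G = (∑ i, Real.negMulLog (hH.eigenvalues i)) / Real.log 2 := by
    rw [graphEntropy, matEntropy, dif_pos hH]
    have h : ∀ i : Fin n, hH.eigenvalues i * Real.logb 2 (hH.eigenvalues i)
        = -(Real.negMulLog (hH.eigenvalues i) / Real.log 2) := by
      intro i; rw [Real.negMulLog, Real.logb]; ring
    simp_rw [h, Finset.sum_neg_distrib, neg_neg, Finset.sum_div]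
  have hSnn : 0 ≤ ∑ i, Real.negMulLog (hH.eigenvalues i) :=
    Finset.sum_nonneg fun i _ => Real.negMulLog_nonneg (heignn i) (hle1 i)
  refine ⟨hEnt ▸ div_nonneg hSnn hlog2.le, ?_⟩
  -- Jensen
  have hcard : (Finset.univ.erase i0).card = n - 1 := by
    rw [Finset.card_erase_of_mem (Finset.mem_univ i0)]; simp
  have hcast : ((n - 1 : ℕ) : ℝ) = (n : ℝ) - 1 := by
    push_cast [Nat.cast_sub (by omega : 1 ≤ n)]; ring
  have hw : ∑ _i ∈ Finset.univ.erase i0, ((n : ℝ) - 1)⁻¹ = 1 := by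
    rw [Finset.sum_const, hcard, nsmul_eq_mul, hcast, mul_inv_cancel₀ hn1.ne']
  have hJ := Real.concaveOn_negMulLog.le_map_sum (t := Finset.univ.erase i0)
      (w := fun _ => ((n : ℝ) - 1)⁻¹) (p := hH.eigenvalues)
      (fun i _ => by positivity) hw (fun i _ => Set.mem_Ici.mpr (heignn i))
  have hJ' : ((n : ℝ) - 1)⁻¹ * (∑ i ∈ Finset.univ.erase i0, Real.negMulLog (hH.eigenvalues i))
      ≤ Real.negMulLog (((n : ℝ) - 1)⁻¹ * s) := by
    simpa [smul_eq_mul, ← Finset.mul_sum, hs_def] using hJ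
  have hexp : Real.negMulLog (((n : ℝ) - 1)⁻¹ * s)
      = ((n : ℝ) - 1)⁻¹ * (Real.negMulLog s + s * Real.log ((n : ℝ) - 1)) := by
    rw [Real.negMulLog_mul]
    have : Real.negMulLog ((n : ℝ) - 1)⁻¹ = ((n : ℝ) - 1)⁻¹ * Real.log ((n : ℝ) - 1) := by
      rw [Real.negMulLog, Real.log_inv]; ring
    rw [this]; ring
  have hT : ∑ i ∈ Finset.univ.erase i0, Real.negMulLog (hH.eigenvalues i)
      ≤ Real.negMulLog s + s * Real.log ((n : ℝ) - 1) := by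
    rw [hexp] at hJ'
    exact le_of_mul_le_mul_left hJ' (by positivity)
  have hlogn : (0 : ℝ) < Real.log ((n : ℝ) - 1) := Real.log_pos (by linarith)
  have hSraw : ∑ i, Real.negMulLog (hH.eigenvalues i)
      ≤ 2 + (1 - μ) * Real.log ((n : ℝ) - 1) := by
    have hsplit : ∑ i, Real.negMulLog (hH.eigenvalues i)
        = Real.negMulLog (hH.eigenvalues i0)
          + ∑ i ∈ Finset.univ.erase i0, Real.negMulLog (hH.eigenvalues i) :=
      (Finset.add_sum_erase _ _ (Finset.mem_univ i0)).symm
    rw [hsplit, hi0]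
    have h1 : Real.negMulLog μ ≤ 1 := negMulLog_le_one' hμ0
    have h2 : Real.negMulLog s ≤ 1 := negMulLog_le_one' hs0
    rw [hs_eq] at hT h2
    linarith
  -- final division
  have hlogb : Real.logb 2 ((n : ℝ) - 1) = Real.log ((n : ℝ) - 1) / Real.log 2 := rfl
  have hlogbpos : (0 : ℝ) < Real.logb 2 ((n : ℝ) - 1) := by
    rw [hlogb]; positivity
  have hEnt_le : graphEntropy G ≤ (2 + (1 - μ) * Real.log ((n : ℝ) - 1)) / Real.log 2 := by
    rw [hEnt]
    exact (div_le_div_iff_of_pos_right hlog2).mpr hSraw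
  calc graphEntropy G / Real.logb 2 ((n : ℝ) - 1)
      ≤ ((2 + (1 - μ) * Real.log ((n : ℝ) - 1)) / Real.log 2) / Real.logb 2 ((n : ℝ) - 1) := by
        exact (div_le_div_iff_of_pos_right hlogbpos).mpr hEnt_le
    _ = (1 - μ) + 2 / Real.log ((n : ℝ) - 1) := by
        rw [hlogb]
        field_simp
        ring
    _ = (1 - (n : ℝ) / d) + 2 / Real.log ((n : ℝ) - 1) := by rw [hμ_def]

end Graph



/-- Let `Gₙ` be a sequence of graphs on `n` vertices, each containing
a vertex adjacent to all the others, whose average degrees `d_{Gₙ}/n` converge to a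
finite limit `d_∞`. Then `limsup S(Gₙ)/log₂(n-1) ≤ 1 - 1/d_∞`. -/
theorem entropy_limsup_of_dominating_vertex
    (G : (n : ℕ) → SimpleGraph (Fin n)) (hdec : ∀ n, DecidableRel (G n).Adj)
    (hv : ∀ n, 2 ≤ n → ∃ v : Fin n, ∀ u, u ≠ v → (G n).Adj v u)
    (dinf : ℝ)
    (hd : Filter.Tendsto
      (fun n : ℕ => (@degreeSum (Fin n) _ (G n) (hdec n) : ℝ) / (n : ℝ))
      Filter.atTop (nhds dinf)) :
    Filter.limsup
      (fun n : ℕ => (@graphEntropy (Fin n) _ _ (G n) (hdec n)) / Real.logb 2 ((n : ℝ) - 1))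
      Filter.atTop ≤ 1 - 1 / dinf := by
  have hds : ∀ᶠ n : ℕ in Filter.atTop,
      2 * ((n : ℝ) - 1) / n ≤ (@degreeSum (Fin n) _ (G n) (hdec n) : ℝ) / n := by
    filter_upwards [Filter.eventually_ge_atTop 2] with n hn
    obtain ⟨v, hvn⟩ := hv n hn
    letI := hdec n
    have h := degreeSum_ge (G n) v hvn
    have hc : 2 * ((n : ℝ) - 1) ≤ (degreeSum (G n) : ℝ) := by
      calc 2 * ((n : ℝ) - 1) = ((2 * (n - 1) : ℕ) : ℝ) := by
            push_cast [Nat.cast_sub (by omega : 1 ≤ n)]; ring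
      _ ≤ _ := by exact_mod_cast h
    have hnpos : (0 : ℝ) < n := by positivity
    exact (div_le_div_iff_of_pos_right hnpos).mpr hc
  have h2n : Filter.Tendsto (fun n : ℕ => 2 * ((n : ℝ) - 1) / n) Filter.atTop (nhds 2) := by
    have h0 : Filter.Tendsto (fun n : ℕ => 1 / (n : ℝ)) Filter.atTop (nhds 0) :=
      tendsto_one_div_atTop_nhds_zero_nat
    have h1 : Filter.Tendsto (fun n : ℕ => 2 - 2 * (1 / (n : ℝ))) Filter.atTop
        (nhds (2 - 2 * 0)) := tendsto_const_nhds.sub (tendsto_const_nhds.mul h0)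
    rw [show (2 : ℝ) - 2 * 0 = 2 by ring] at h1
    apply h1.congr'
    filter_upwards [Filter.eventually_ge_atTop 1] with n hn
    have : (n : ℝ) ≠ 0 := by positivity
    field_simp
  have h2inf : (2 : ℝ) ≤ dinf := le_of_tendsto_of_tendsto h2n hd hds
  have hdinf0 : dinf ≠ 0 := by linarith
  have hinv : Filter.Tendsto
      (fun n : ℕ => (n : ℝ) / (@degreeSum (Fin n) _ (G n) (hdec n) : ℝ))
      Filter.atTop (nhds dinf⁻¹) := by
    apply (hd.inv₀ hdinf0).congr
    intro n
    rw [inv_div]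
  have hlog0 : Filter.Tendsto (fun n : ℕ => 2 / Real.log ((n : ℝ) - 1)) Filter.atTop
      (nhds 0) :=
    Filter.Tendsto.div_atTop tendsto_const_nhds
      (Real.tendsto_log_atTop.comp
        (Filter.tendsto_atTop_add_const_right Filter.atTop (-1) tendsto_natCast_atTop_atTop))
  set f := fun n : ℕ =>
    (@graphEntropy (Fin n) _ _ (G n) (hdec n)) / Real.logb 2 ((n : ℝ) - 1) with hf_def
  set g := fun n : ℕ =>
    (1 - (n : ℝ) / (@degreeSum (Fin n) _ (G n) (hdec n) : ℝ)) + 2 / Real.log ((n : ℝ) - 1)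
    with hg_def
  have hg : Filter.Tendsto g Filter.atTop (nhds ((1 - dinf⁻¹) + 0)) :=
    (tendsto_const_nhds.sub hinv).add hlog0
  have hfg : ∀ᶠ n : ℕ in Filter.atTop, f n ≤ g n := by
    filter_upwards [Filter.eventually_ge_atTop 3] with n hn
    obtain ⟨v, hvn⟩ := hv n (by omega)
    letI := hdec n
    exact (entropy_bound (G n) v hvn hn).2
  have hf0 : ∀ᶠ n : ℕ in Filter.atTop, (0 : ℝ) ≤ f n := by
    filter_upwards [Filter.eventually_ge_atTop 3] with n hn
    obtain ⟨v, hvn⟩ := hv n (by omega)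
    letI := hdec n
    have h1 := (entropy_bound (G n) v hvn hn).1
    have hn3 : (3 : ℝ) ≤ (n : ℝ) := by exact_mod_cast hn
    have hlogbpos : (0 : ℝ) < Real.logb 2 ((n : ℝ) - 1) :=
      Real.logb_pos one_lt_two (by linarith)
    exact div_nonneg h1 hlogbpos.le
  have hcb : Filter.IsCoboundedUnder (· ≤ ·) Filter.atTop f :=
    Filter.IsBoundedUnder.isCoboundedUnder_le ⟨0, by simpa using hf0⟩
  calc Filter.limsup f Filter.atTop
      ≤ Filter.limsup g Filter.atTop :=
        Filter.limsup_le_limsup hfg hcb hg.isBoundedUnder_le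
    _ = (1 - dinf⁻¹) + 0 := hg.limsup_eq
    _ = 1 - 1 / dinf := by rw [one_div]; ring
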